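/- Every binary word w containing a pattern p has a unique 'primitive reduction': deleting from w all indices not contained in any occurrence of p yields a word w' that is primitive with respect to p and satisfies c_p(w') = c_p(w). -/

import Mathlib

/-- An occurrence of the pattern `p` in the word `w`: a strictly increasing
index tuple whose corresponding subsequence of `w` equals `p`. -/
def Occ (p w : List Bool) : Type :=
  {f : Fin p.length → Fin w.length // StrictMono f ∧ ∀ j, w.get (f j) = p.get j}

/-- `numOcc p w` is `c_p(w)`, the number of occurrences of `p` in `w`. -/
noncomputable def numOcc (p w : List Bool) : ℕ := Nat.card (Occ p w)

/-- `w` is primitive with respect to `p` if every index of `w` is contained in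
some occurrence of `p` in `w`. -/
def Primitive (p w : List Bool) : Prop :=
  ∀ i : Fin w.length, ∃ g : Occ p w, ∃ j, g.1 j = i

open Classical in
/-- The primitive reduction of `w` with respect to `p`: delete all indices of `w`
not contained in any occurrence of `p`. -/
noncomputable def reduce (p w : List Bool) : List Bool :=
  (((List.finRange w.length).filter
    fun i => decide (∃ g : Occ p w, ∃ j, g.1 j = i)).map w.get)

open Classical

noncomputable def goodList (p w : List Bool) : List (Fin w.length) :=
  (List.finRange w.length).filter fun i => decide (∃ g : Occ p w, ∃ j, g.1 j = i)

lemma mem_goodList (p w : List Bool) (i : Fin w.length) :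
    i ∈ goodList p w ↔ ∃ g : Occ p w, ∃ j, g.1 j = i := by
  simp [goodList, List.mem_filter]

lemma goodList_strictMono (p w : List Bool) :
    StrictMono (fun k : Fin (goodList p w).length => (goodList p w).get k) := by
  intro a b hab
  exact List.pairwise_iff_get.mp
    ((List.pairwise_lt_finRange w.length).sublist List.filter_sublist) a b hab

lemma reduce_eq (p w : List Bool) : reduce p w = (goodList p w).map w.get := rfl

lemma reduce_length (p w : List Bool) :
    (reduce p w).length = (goodList p w).length := by
  simp [reduce_eq]

lemma reduce_get (p w : List Bool) (k : Fin (reduce p w).length) :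
    (reduce p w).get k = w.get ((goodList p w).get (Fin.cast (reduce_length p w) k)) := by
  simp only [List.get_eq_getElem]
  simp [reduce_eq, Fin.cast]

noncomputable def idx (p w : List Bool) (i : Fin w.length) (hi : i ∈ goodList p w) :
    Fin (goodList p w).length :=
  ⟨(goodList p w).idxOf i, List.idxOf_lt_length_iff.mpr hi⟩

lemma get_idx (p w : List Bool) (i : Fin w.length) (hi : i ∈ goodList p w) :
    (goodList p w).get (idx p w i hi) = i :=
  List.idxOf_get _

lemma occ_mem_goodList (p w : List Bool) (g : Occ p w) (j : Fin p.length) :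
    g.1 j ∈ goodList p w :=
  (mem_goodList p w _).mpr ⟨g, j, rfl⟩

lemma idx_get (p w : List Bool) (k : Fin (goodList p w).length)
    (hk : (goodList p w).get k ∈ goodList p w) :
    idx p w ((goodList p w).get k) hk = k :=
  (goodList_strictMono p w).injective (get_idx p w _ _)

noncomputable def occEquiv (p w : List Bool) : Occ p (reduce p w) ≃ Occ p w where
  toFun g := ⟨fun j => (goodList p w).get (Fin.cast (reduce_length p w) (g.1 j)), by
    constructor
    · intro a b hab
      exact goodList_strictMono p w (by simpa using g.2.1 hab)
    · intro j
      rw [← reduce_get p w (g.1 j)]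
      exact g.2.2 j⟩
  invFun g := ⟨fun j => Fin.cast (reduce_length p w).symm
      (idx p w (g.1 j) (occ_mem_goodList p w g j)), by
    constructor
    · intro a b hab
      have key := (goodList_strictMono p w).lt_iff_lt
        (a := idx p w (g.1 a) (occ_mem_goodList p w g a))
        (b := idx p w (g.1 b) (occ_mem_goodList p w g b))
      simp only [get_idx] at key
      exact key.mp (g.2.1 hab)
    · intro j
      rw [reduce_get]
      have : (goodList p w).get (Fin.cast (reduce_length p w) (Fin.cast (reduce_length p w).symm
          (idx p w (g.1 j) (occ_mem_goodList p w g j)))) = g.1 j := get_idx p w (g.1 j) (occ_mem_goodList p w g j)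
      rw [this]
      exact g.2.2 j⟩
  left_inv g := by
    apply Subtype.ext
    funext j
    exact congrArg (Fin.cast (reduce_length p w).symm)
      (idx_get p w (Fin.cast (reduce_length p w) (g.1 j)) (List.get_mem _ _))
  right_inv g := by
    apply Subtype.ext
    funext j
    exact get_idx p w (g.1 j) (occ_mem_goodList p w g j)

theorem stmt13 (p w : List Bool) (h : Nonempty (Occ p w)) :
    Primitive p (reduce p w) ∧ numOcc p (reduce p w) = numOcc p w := by
  constructor
  · intro i
    have hm : (goodList p w).get (Fin.cast (reduce_length p w) i) ∈ goodList p w :=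
      List.get_mem _ _
    obtain ⟨g, j, hj⟩ := (mem_goodList p w _).mp hm
    refine ⟨(occEquiv p w).symm g, j, ?_⟩
    have hidx : idx p w (g.1 j) (occ_mem_goodList p w g j) = Fin.cast (reduce_length p w) i :=
      (goodList_strictMono p w).injective ((get_idx p w _ _).trans hj)
    exact congrArg (Fin.cast (reduce_length p w).symm) hidx
  · exact Nat.card_congr (occEquiv p w)
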